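/- With measurement phases φ₁ = 0, φ₂ = π/2, φ₃ = π and y_l = |z₀ + z e^{jφₗ}|² for l = 1,2,3, where z₀ z̄ ≠ 0, the phase θ* = arg(y₁ − y₃ + j(2y₂ − y₁ − y₃)) maximizes θ ↦ |z₀ + z e^{jθ}|². -/

import Mathlib

open Complex Real

theorem stmt_4 (z₀ z : ℂ) (hz : z₀ * (starRingEnd ℂ) z ≠ 0)
    (y₁ y₂ y₃ : ℝ)
    (h1 : y₁ = ‖z₀ + z * Complex.exp ((0 : ℂ) * Complex.I)‖ ^ 2)
    (h2 : y₂ = ‖z₀ + z * Complex.exp (((Real.pi / 2 : ℝ) : ℂ) * Complex.I)‖ ^ 2)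
    (h3 : y₃ = ‖z₀ + z * Complex.exp (((Real.pi : ℝ) : ℂ) * Complex.I)‖ ^ 2) :
    ∀ θ : ℝ,
      ‖z₀ + z * Complex.exp (((((y₁ - y₃ : ℝ) : ℂ) + ((2 * y₂ - y₁ - y₃ : ℝ) : ℂ) * Complex.I).arg : ℂ) * Complex.I)‖ ^ 2
        ≥ ‖z₀ + z * Complex.exp ((θ : ℂ) * Complex.I)‖ ^ 2 := by
  intro θ
  set v : ℂ := z₀ * (starRingEnd ℂ) z with hv
  -- exp values
  have e1 : Complex.exp ((0 : ℂ) * Complex.I) = 1 := by simp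
  have e2 : Complex.exp (((Real.pi / 2 : ℝ) : ℂ) * Complex.I) = Complex.I := by
    rw [Complex.exp_mul_I]
    push_cast
    simp [Complex.cos_pi_div_two, Complex.sin_pi_div_two]
  have e3 : Complex.exp (((Real.pi : ℝ) : ℂ) * Complex.I) = -1 := by
    exact_mod_cast Complex.exp_pi_mul_I
  -- key identity
  have key : ((y₁ - y₃ : ℝ) : ℂ) + ((2 * y₂ - y₁ - y₃ : ℝ) : ℂ) * Complex.I = 4 * v := by
    subst h1 h2 h3
    rw [e1, e2, e3] at *
    simp only [← Complex.normSq_eq_norm_sq, hv]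
    apply Complex.ext <;>
      simp [Complex.normSq_apply, Complex.add_re, Complex.add_im, Complex.mul_re,
        Complex.mul_im] <;> ring
  -- expansion
  have expand : ∀ t : ℝ, ‖z₀ + z * Complex.exp ((t : ℂ) * Complex.I)‖ ^ 2
      = ‖z₀‖ ^ 2 + ‖z‖ ^ 2 + 2 * (v * Complex.exp (-(t : ℂ) * Complex.I)).re := by
    intro t
    have hc : (starRingEnd ℂ) (z * Complex.exp ((t : ℂ) * Complex.I))
        = (starRingEnd ℂ) z * Complex.exp (-(t : ℂ) * Complex.I) := by
      rw [map_mul, ← Complex.exp_conj]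
      congr 1
      simp [Complex.conj_I, Complex.conj_ofReal]
    rw [← Complex.normSq_eq_norm_sq, ← Complex.normSq_eq_norm_sq, ← Complex.normSq_eq_norm_sq,
      Complex.normSq_add, hc, Complex.normSq_mul]
    have : Complex.normSq (Complex.exp ((t : ℂ) * Complex.I)) = 1 := by
      rw [Complex.normSq_eq_norm_sq, Complex.norm_exp_ofReal_mul_I]; norm_num
    rw [this, mul_one, hv]
    ring_nf
  rw [key, expand, expand]
  have harg : (4 * v).arg = v.arg := by
    rw [show (4 : ℂ) = ((4 : ℝ) : ℂ) by norm_num, Complex.arg_real_mul v (by norm_num)]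
  rw [harg]
  have hmax : (v * Complex.exp (-(v.arg : ℂ) * Complex.I)).re = ‖v‖ := by
    nth_rewrite 1 [← Complex.norm_mul_exp_arg_mul_I v]
    rw [mul_assoc, ← Complex.exp_add,
      show (v.arg : ℂ) * Complex.I + -(v.arg : ℂ) * Complex.I = 0 by ring,
      Complex.exp_zero, mul_one, Complex.ofReal_re]
  have hle : (v * Complex.exp (-(θ : ℂ) * Complex.I)).re ≤ ‖v‖ := by
    calc (v * Complex.exp (-(θ : ℂ) * Complex.I)).re
        ≤ ‖v * Complex.exp (-(θ : ℂ) * Complex.I)‖ := Complex.re_le_norm _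
      _ = ‖v‖ := by
          rw [norm_mul, show -(θ : ℂ) * Complex.I = ((-θ : ℝ) : ℂ) * Complex.I by push_cast; ring,
            Complex.norm_exp_ofReal_mul_I, mul_one]
  rw [hmax] at *
  linarith
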